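/- arXiv:1411.1352 — 2 statements merged into one kernel-verified Lean document; each statement's English description precedes it below -/
import Mathlib

section
/- Let U ⊆ ℝ^m and V ⊆ ℝ^n be subspaces of dimension r, and let P_{U^⊥} ∈ ℝ^{m×m}, P_{V^⊥} ∈ ℝ^{n×n} be the orthogonal projections onto their orthogonal complements. If Δ ∈ ℝ^{m×n} satisfies P_{U^⊥} Δ P_{V^⊥} = 0, then rank(Δ) ≤ 2r, and consequently ‖Δ‖_* ≤ √(2r) · ‖Δ‖_F. -/
open Matrix
open scoped BigOperators

noncomputable section

/-- Frobenius norm -/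
def frobNorm {m n : Type*} [Fintype m] [Fintype n] (M : Matrix m n ℝ) : ℝ :=
  Real.sqrt (∑ i, ∑ j, (M i j) ^ 2)

/-- nuclear norm (sum of singular values) -/
def nuclearNorm {m n : Type*} [Fintype m] [Fintype n] [DecidableEq n]
    (M : Matrix m n ℝ) : ℝ :=
  ∑ i, Real.sqrt ((show (Mᵀ * M).IsHermitian by
    rw [← Matrix.conjTranspose_eq_transpose_of_trivial]
    exact Matrix.isHermitian_conjTranspose_mul_self M).eigenvalues i)

/-- If `P_{U^⊥} Δ P_{V^⊥} = 0` for `r`-dimensional subspaces `U ⊆ ℝ^m`, `V ⊆ ℝ^n`,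
then `rank Δ ≤ 2r` and hence `‖Δ‖_* ≤ √(2r) ‖Δ‖_F`. -/
theorem stmt11 (m n r : ℕ)
    (U : Submodule ℝ (EuclideanSpace ℝ (Fin m)))
    (V : Submodule ℝ (EuclideanSpace ℝ (Fin n)))
    (hU : Module.finrank ℝ U = r) (hV : Module.finrank ℝ V = r)
    (Δ : Matrix (Fin m) (Fin n) ℝ)
    (h : ∀ y : EuclideanSpace ℝ (Fin n),
      Submodule.orthogonalProjectionOnto Uᗮ
        (Matrix.toEuclideanLin Δ ((Submodule.orthogonalProjectionOnto Vᗮ y : Vᗮ) :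
          EuclideanSpace ℝ (Fin n))) = 0) :
    Δ.rank ≤ 2 * r ∧ nuclearNorm Δ ≤ Real.sqrt (2 * r) * frobNorm Δ := by
  set T : EuclideanSpace ℝ (Fin n) →ₗ[ℝ] EuclideanSpace ℝ (Fin m) :=
    Matrix.toEuclideanLin Δ with hT
  -- rank bound
  have hrank : Δ.rank ≤ 2 * r := by
    have key : Δ.rank = Module.finrank ℝ (LinearMap.range T) := by
      rw [hT, Matrix.toEuclideanLin_eq_toLin]
      exact Matrix.rank_eq_finrank_range_toLin Δ _ _
    rw [key]
    have hsup : LinearMap.range T = Submodule.map T V ⊔ Submodule.map T Vᗮ := by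
      rw [← Submodule.map_sup, Submodule.sup_orthogonal_of_hasOrthogonalProjection,
        Submodule.map_top]
    have h1 : Module.finrank ℝ (Submodule.map T V) ≤ r := hV ▸ Submodule.finrank_map_le T V
    have h2 : Module.finrank ℝ (Submodule.map T Vᗮ) ≤ r := by
      have hle : Submodule.map T Vᗮ ≤ U := by
        rintro _ ⟨x, hx, rfl⟩
        have hfix : ((Submodule.orthogonalProjectionOnto Vᗮ x : Vᗮ) : EuclideanSpace ℝ (Fin n)) = x :=
          Submodule.starProjection_eq_self_iff.2 hx
        have := h x
        rw [hfix] at this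
        have hmem : T x ∈ Uᗮᗮ := Submodule.orthogonalProjectionOnto_eq_zero_iff.1 this
        rwa [Submodule.orthogonal_orthogonal] at hmem
      exact hU ▸ Submodule.finrank_mono hle
    rw [hsup, two_mul]
    exact (Submodule.finrank_add_le_finrank_add_finrank _ _).trans (add_le_add h1 h2)
  refine ⟨hrank, ?_⟩
  -- spectral data
  set hH := Matrix.isHermitian_conjTranspose_mul_self Δ with hHdef
  set μ : Fin n → ℝ := hH.eigenvalues with hμ
  have hμ0 : ∀ i, 0 ≤ μ i := fun i => Matrix.eigenvalues_conjTranspose_mul_self_nonneg Δ i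
  -- trace equals sum of eigenvalues
  have htr : (Δᴴ * Δ).trace = ∑ i, μ i := by
    nth_rewrite 1 [hH.spectral_theorem]
    rw [Unitary.conjStarAlgAut_apply, Matrix.trace_mul_cycle]
    have : (star (Matrix.IsHermitian.eigenvectorUnitary hH : Matrix (Fin n) (Fin n) ℝ)) *
        (Matrix.IsHermitian.eigenvectorUnitary hH : Matrix (Fin n) (Fin n) ℝ) = 1 :=
      Unitary.coe_star_mul_self _
    rw [this, one_mul, Matrix.trace_diagonal]
    simp [hμ]
  have htr2 : (Δᴴ * Δ).trace = ∑ i, ∑ j, (Δ i j) ^ 2 := by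
    rw [Finset.sum_comm (f := fun i j => (Δ i j) ^ 2)]
    simp [Matrix.trace, Matrix.diag, Matrix.mul_apply, Matrix.conjTranspose_apply, sq]
  -- card of nonzero eigenvalues
  classical
  set s : Finset (Fin n) := Finset.univ.filter (fun i => μ i ≠ 0) with hs
  have hcard : s.card = Δ.rank := by
    rw [hs, ← Fintype.card_subtype, ← hH.rank_eq_card_non_zero_eigs,
      Matrix.rank_conjTranspose_mul_self]
  -- Cauchy-Schwarz
  have hsum_eq : nuclearNorm Δ = ∑ i ∈ s, Real.sqrt (μ i) := by
    have hdef : nuclearNorm Δ = ∑ i, Real.sqrt (μ i) := rfl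
    rw [hdef]
    refine (Finset.sum_subset (Finset.subset_univ s) ?_).symm
    intro i _ hi
    have h0 : μ i = 0 := by simpa [hs] using hi
    rw [h0, Real.sqrt_zero]
  have hCS : (∑ i ∈ s, Real.sqrt (μ i)) ^ 2 ≤ s.card * ∑ i, μ i := by
    refine (sq_sum_le_card_mul_sum_sq (s := s) (f := fun i => Real.sqrt (μ i))).trans ?_
    refine mul_le_mul_of_nonneg_left ?_ (Nat.cast_nonneg _)
    calc ∑ i ∈ s, Real.sqrt (μ i) ^ 2 = ∑ i ∈ s, μ i := by
            exact Finset.sum_congr rfl fun i _ => Real.sq_sqrt (hμ0 i)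
        _ ≤ ∑ i, μ i := Finset.sum_le_sum_of_subset_of_nonneg (Finset.subset_univ s)
            (fun i _ _ => hμ0 i)
  have hnn_nonneg : 0 ≤ ∑ i ∈ s, Real.sqrt (μ i) :=
    Finset.sum_nonneg fun i _ => Real.sqrt_nonneg _
  have : nuclearNorm Δ ≤ Real.sqrt (s.card * ∑ i, μ i) := by
    rw [hsum_eq]
    have h2 := Real.sqrt_le_sqrt hCS
    rwa [Real.sqrt_sq hnn_nonneg] at h2
  refine this.trans ?_
  rw [Real.sqrt_mul (by positivity)]
  have hfro : Real.sqrt (∑ i, μ i) = frobNorm Δ := by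
    rw [frobNorm, ← htr2, htr]
  rw [hfro]
  gcongr
  · exact Real.sqrt_nonneg _
  · exact_mod_cast hcard ▸ hrank

end
end

section
/- Let Σ ∈ ℝ^{p_t p_s × p_t p_s} be block Toeplitz with respect to its p_t×p_t partition into p_s×p_s blocks, i.e., the (i,j)-th p_s×p_s block Σ(i,j) depends only on i − j. Then Σ admits a decomposition Σ = Σ_{i=1}^{m} σ_i · A_i ⊗ B_i with m ≤ min(2p_t−1, p_s²), where each A_i ∈ ℝ^{p_t×p_t} is a Toeplitz matrix with ‖A_i‖_F = 1, each B_i ∈ ℝ^{p_s×p_s} satisfies ‖B_i‖_F = 1, the σ_i ≥ 0 are nonincreasing, and the families {A_i : σ_i > 0} and {B_i : σ_i > 0} are each linearly independent. -/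
open Matrix
open scoped Kronecker BigOperators

noncomputable section

lemma frobNorm_pos {m n : Type*} [Fintype m] [Fintype n] {M : Matrix m n ℝ}
    (h : M ≠ 0) : 0 < frobNorm M := by
  apply Real.sqrt_pos.2
  have : ∃ i j, M i j ≠ 0 := by
    by_contra hc
    push_neg at hc
    exact h (by ext i j; simp [hc])
  obtain ⟨i, j, hij⟩ := this
  apply Finset.sum_pos'
  · intro i _
    exact Finset.sum_nonneg fun j _ => sq_nonneg _
  · exact ⟨i, Finset.mem_univ _, Finset.sum_pos'
      (fun j _ => sq_nonneg _) ⟨j, Finset.mem_univ _, by positivity⟩⟩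

lemma frobNorm_smul {m n : Type*} [Fintype m] [Fintype n] (c : ℝ) (M : Matrix m n ℝ) :
    frobNorm (c • M) = |c| * frobNorm M := by
  unfold frobNorm
  simp only [Matrix.smul_apply, smul_eq_mul, mul_pow, ← Finset.mul_sum]
  rw [Real.sqrt_mul (sq_nonneg c), Real.sqrt_sq_eq_abs]

lemma frobNorm_normalize {m n : Type*} [Fintype m] [Fintype n] {M : Matrix m n ℝ}
    (h : M ≠ 0) : frobNorm ((frobNorm M)⁻¹ • M) = 1 := by
  have hp := frobNorm_pos h
  rw [frobNorm_smul, abs_of_nonneg (inv_nonneg.2 hp.le), inv_mul_cancel₀ hp.ne']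

lemma kron_sum_left {m p : Type*} [Fintype m] [Fintype p] {ι : Type*} (s : Finset ι)
    (f : ι → Matrix m m ℝ) (B : Matrix p p ℝ) :
    (∑ i ∈ s, f i) ⊗ₖ B = ∑ i ∈ s, f i ⊗ₖ B := by
  ext ⟨k, a⟩ ⟨l, b⟩
  simp [Matrix.sum_apply, Matrix.kroneckerMap_apply, Finset.sum_mul]

lemma kron_sum_right {m p : Type*} [Fintype m] [Fintype p] {ι : Type*} (s : Finset ι)
    (A : Matrix m m ℝ) (f : ι → Matrix p p ℝ) :
    A ⊗ₖ (∑ i ∈ s, f i) = ∑ i ∈ s, A ⊗ₖ f i := by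
  ext ⟨k, a⟩ ⟨l, b⟩
  simp [Matrix.sum_apply, Matrix.kroneckerMap_apply, Finset.mul_sum]

/-- auxiliary decomposition: unnormalized, unsorted -/
lemma aux_decomp (pt ps : ℕ) (S : Matrix (Fin pt × Fin ps) (Fin pt × Fin ps) ℝ)
    (hToep : ∀ i j i' j' : Fin pt, (i : ℤ) - (j : ℤ) = (i' : ℤ) - (j' : ℤ) →
      ∀ a b : Fin ps, S (i, a) (j, b) = S (i', a) (j', b)) :
    ∃ (r : ℕ), r ≤ min (2 * pt - 1) (ps * ps) ∧
    ∃ (A : Fin r → Matrix (Fin pt) (Fin pt) ℝ) (B : Fin r → Matrix (Fin ps) (Fin ps) ℝ),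
      S = ∑ i, A i ⊗ₖ B i ∧
      (∀ i, ∀ k l k' l' : Fin pt, (k : ℤ) - (l : ℤ) = (k' : ℤ) - (l' : ℤ) →
        A i k l = A i k' l') ∧
      LinearIndependent ℝ A ∧ LinearIndependent ℝ B := by
  classical
  -- diagonal data
  have hrow : ∀ d : Fin (2 * pt - 1), d.val - (pt - 1) < pt := fun d => by
    have := d.isLt; omega
  have hcol : ∀ d : Fin (2 * pt - 1), (pt - 1) - d.val < pt := fun d => by
    have := d.isLt; omega
  set row : Fin (2 * pt - 1) → Fin pt := fun d => ⟨d.val - (pt - 1), hrow d⟩ with hrowdef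
  set col : Fin (2 * pt - 1) → Fin pt := fun d => ⟨(pt - 1) - d.val, hcol d⟩ with hcoldef
  set δ : Fin (2 * pt - 1) → ℤ := fun d => (d : ℤ) - ((pt - 1 : ℕ) : ℤ) with hδdef
  set T : Fin (2 * pt - 1) → Matrix (Fin pt) (Fin pt) ℝ :=
    fun d => Matrix.of (fun k l => if (k : ℤ) - (l : ℤ) = δ d then (1 : ℝ) else 0) with hTdef
  set B : Fin (2 * pt - 1) → Matrix (Fin ps) (Fin ps) ℝ :=
    fun d => Matrix.of (fun a b => S (row d, a) (col d, b)) with hBdef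
  have hδrc : ∀ d, ((row d : ℕ) : ℤ) - ((col d : ℕ) : ℤ) = δ d := fun d => by
    have := d.isLt
    simp only [hrowdef, hcoldef, hδdef]
    omega
  -- step 1 : S = ∑ d, T d ⊗ₖ B d
  have hS0 : S = ∑ d, T d ⊗ₖ B d := by
    ext ⟨k, a⟩ ⟨l, b⟩
    rw [Matrix.sum_apply]
    have hkl : k.val + (pt - 1) - l.val < 2 * pt - 1 := by
      have := k.isLt; have := l.isLt; omega
    rw [Finset.sum_eq_single (⟨k.val + (pt - 1) - l.val, hkl⟩ : Fin (2 * pt - 1))]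
    · have h1 : (k : ℤ) - (l : ℤ) = δ ⟨k.val + (pt - 1) - l.val, hkl⟩ := by
        have := k.isLt; have := l.isLt
        simp only [hδdef, Fin.val_mk]
        omega
      simp only [Matrix.kroneckerMap_apply, hTdef, hBdef, Matrix.of_apply]
      rw [if_pos h1, one_mul]
      exact (hToep _ _ _ _ (h1.trans (hδrc _).symm) a b)
    · intro d _ hd
      have h2 : (k : ℤ) - (l : ℤ) ≠ δ d := by
        intro hcon
        apply hd
        apply Fin.ext
        show (d : ℕ) = k.val + (pt - 1) - l.val
        have := k.isLt; have := l.isLt; have := d.isLt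
        simp only [hδdef] at hcon
        omega
      simp only [Matrix.kroneckerMap_apply, hTdef, Matrix.of_apply, if_neg h2, zero_mul]
    · intro h; exact absurd (Finset.mem_univ _) h
  -- step 2 : T is linearly independent
  have hTind : LinearIndependent ℝ T := by
    rw [Fintype.linearIndependent_iff]
    intro g hg d
    have := congrFun (congrFun hg (row d)) (col d)
    rw [Matrix.sum_apply] at this
    rw [Finset.sum_eq_single d] at this
    · simpa [hTdef, hδrc d] using this
    · intro d' _ hd'
      have h2 : ((row d : ℕ) : ℤ) - ((col d : ℕ) : ℤ) ≠ δ d' := by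
        rw [hδrc d]
        intro hcon
        apply hd'
        apply Fin.ext
        simp only [hδdef] at hcon
        omega
      simp [hTdef, if_neg h2]
    · intro h; exact absurd (Finset.mem_univ _) h
  -- the span of the blocks
  set W : Submodule ℝ (Matrix (Fin ps) (Fin ps) ℝ) := Submodule.span ℝ (Set.range B) with hWdef
  set r : ℕ := Module.finrank ℝ W with hrdef
  refine ⟨r, ?_, ?_⟩
  · refine le_min ?_ ?_
    · have h1 := finrank_range_le_card (R := ℝ) B
      simpa [Set.finrank] using h1
    · have h2 : r ≤ Module.finrank ℝ (Matrix (Fin ps) (Fin ps) ℝ) := Submodule.finrank_le W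
      simpa [Module.finrank_matrix] using h2
  set bC : Module.Basis (Fin r) ℝ W := Module.finBasis ℝ W with hbCdef
  set C : Fin r → Matrix (Fin ps) (Fin ps) ℝ := fun i => (bC i : Matrix (Fin ps) (Fin ps) ℝ)
    with hCdef
  set v : Fin (2 * pt - 1) → W := fun d => ⟨B d, Submodule.subset_span ⟨d, rfl⟩⟩ with hvdef
  set c : Fin (2 * pt - 1) → Fin r → ℝ := fun d i => bC.repr (v d) i with hcdef
  have hBsum : ∀ d, B d = ∑ i, c d i • C i := fun d => by
    have h := congrArg W.subtype (bC.sum_repr (v d))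
    simp only [map_sum, _root_.map_smul, Submodule.coe_subtype] at h
    exact h.symm
  set A : Fin r → Matrix (Fin pt) (Fin pt) ℝ := fun i => ∑ d, c d i • T d with hAdef
  refine ⟨A, C, ?_, ?_, ?_, ?_⟩
  · -- S = ∑ i, A i ⊗ₖ C i
    rw [hS0]
    have : ∀ d, T d ⊗ₖ B d = ∑ i, c d i • (T d ⊗ₖ C i) := fun d => by
      rw [hBsum d, kron_sum_right]
      congr 1
      ext i
      rw [Matrix.kronecker_smul]
    rw [Finset.sum_congr rfl fun d _ => this d, Finset.sum_comm]
    apply Finset.sum_congr rfl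
    intro i _
    rw [hAdef]
    rw [kron_sum_left]
    apply Finset.sum_congr rfl
    intro d _
    rw [Matrix.smul_kronecker]
  · -- Toeplitz property
    intro i k l k' l' h
    simp only [hAdef, Matrix.sum_apply, Matrix.smul_apply]
    apply Finset.sum_congr rfl
    intro d _
    simp only [hTdef, Matrix.of_apply, h]
  · -- A linearly independent
    rw [Fintype.linearIndependent_iff]
    intro g hg
    have hsum : ∑ d, (∑ i, g i * c d i) • T d = 0 := by
      calc ∑ d, (∑ i, g i * c d i) • T d
          = ∑ d, ∑ i, (g i * c d i) • T d :=
            Finset.sum_congr rfl fun d _ => Finset.sum_smul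
        _ = ∑ i, ∑ d, (g i * c d i) • T d := Finset.sum_comm
        _ = ∑ i, g i • A i := by
            refine Finset.sum_congr rfl fun i _ => ?_
            rw [hAdef, Finset.smul_sum]
            exact Finset.sum_congr rfl fun d _ => (smul_smul _ _ _).symm
        _ = 0 := hg
    have hdc : ∀ d, ∑ i, g i * c d i = 0 :=
      Fintype.linearIndependent_iff.mp hTind _ hsum
    set φ : W →ₗ[ℝ] ℝ :=
      { toFun := fun w => ∑ i, bC.repr w i * g i
        map_add' := fun x y => by
          simp only [map_add, Finsupp.add_apply, add_mul]
          rw [Finset.sum_add_distrib]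
        map_smul' := fun t x => by
          simp only [_root_.map_smul, Finsupp.smul_apply, smul_eq_mul, RingHom.id_apply,
            Finset.mul_sum, mul_assoc] } with hφdef
    have hspan : Submodule.span ℝ (Set.range v) = ⊤ := by
      apply Submodule.map_injective_of_injective W.injective_subtype
      rw [Submodule.map_span, Submodule.map_top, Submodule.range_subtype, ← Set.range_comp]
      have hcv : ⇑W.subtype ∘ v = B := rfl
      rw [hcv]
    have hφv : ∀ d, φ (v d) = 0 := fun d => by
      have := hdc d
      simp only [hφdef, LinearMap.coe_mk, AddHom.coe_mk]
      rw [← this]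
      exact Finset.sum_congr rfl fun i _ => mul_comm _ _
    have hφ0 : φ = (0 : W →ₗ[ℝ] ℝ) := LinearMap.ext_on_range hspan fun d => by
      simpa using hφv d
    intro i0
    have h0 := congrArg (fun f : W →ₗ[ℝ] ℝ => f (bC i0)) hφ0
    simpa [hφdef, Module.Basis.repr_self, Finsupp.single_apply] using h0
  · -- C linearly independent
    have := bC.linearIndependent.map' W.subtype W.ker_subtype
    exact this

/-- A block Toeplitz matrix (blocks `Σ(i,j)` depending only on `i - j`) admits a
Kronecker decomposition `Σ = ∑ σ_i A_i ⊗ B_i` with at most `min(2p_t-1, p_s²)` terms,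
Toeplitz temporal factors `A_i` of unit Frobenius norm, unit Frobenius norm `B_i`,
nonnegative nonincreasing weights, and linearly independent factors. -/
theorem stmt17 (pt ps : ℕ) (S : Matrix (Fin pt × Fin ps) (Fin pt × Fin ps) ℝ)
    (hToep : ∀ i j i' j' : Fin pt, (i : ℤ) - (j : ℤ) = (i' : ℤ) - (j' : ℤ) →
      ∀ a b : Fin ps, S (i, a) (j, b) = S (i', a) (j', b)) :
    ∃ (m : ℕ), m ≤ min (2 * pt - 1) (ps * ps) ∧
    ∃ (σ : Fin m → ℝ) (A : Fin m → Matrix (Fin pt) (Fin pt) ℝ)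
      (B : Fin m → Matrix (Fin ps) (Fin ps) ℝ),
      S = ∑ i, σ i • (A i ⊗ₖ B i) ∧
      (∀ i, ∀ k l k' l' : Fin pt, (k : ℤ) - (l : ℤ) = (k' : ℤ) - (l' : ℤ) →
        A i k l = A i k' l') ∧
      (∀ i, frobNorm (A i) = 1) ∧
      (∀ i, frobNorm (B i) = 1) ∧
      (∀ i, 0 ≤ σ i) ∧
      Antitone σ ∧
      LinearIndependent ℝ (fun i : {i : Fin m // 0 < σ i} => A i) ∧
      LinearIndependent ℝ (fun i : {i : Fin m // 0 < σ i} => B i) := by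
  classical
  obtain ⟨r, hr, A0, B0, hS, hT0, hA0, hB0⟩ := aux_decomp pt ps S hToep
  have hA0ne : ∀ i, A0 i ≠ 0 := fun i => hA0.ne_zero i
  have hB0ne : ∀ i, B0 i ≠ 0 := fun i => hB0.ne_zero i
  set σ' : Fin r → ℝ := fun i => frobNorm (A0 i) * frobNorm (B0 i) with hσ'def
  have hσ'pos : ∀ i, 0 < σ' i := fun i =>
    mul_pos (frobNorm_pos (hA0ne i)) (frobNorm_pos (hB0ne i))
  set π : Equiv.Perm (Fin r) := Tuple.sort (fun i => -σ' i) with hπdef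
  refine ⟨r, hr, fun i => σ' (π i),
    fun i => (frobNorm (A0 (π i)))⁻¹ • A0 (π i),
    fun i => (frobNorm (B0 (π i)))⁻¹ • B0 (π i), ?_, ?_, ?_, ?_, ?_, ?_, ?_, ?_⟩
  · -- sum
    rw [hS, ← Equiv.sum_comp π (fun i => A0 i ⊗ₖ B0 i)]
    refine Finset.sum_congr rfl fun i _ => ?_
    rw [Matrix.smul_kronecker, Matrix.kronecker_smul, smul_smul, smul_smul, hσ'def]
    have ha := (frobNorm_pos (hA0ne (π i))).ne'
    have hb := (frobNorm_pos (hB0ne (π i))).ne'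
    beta_reduce
    rw [show frobNorm (A0 (π i)) * frobNorm (B0 (π i)) * (frobNorm (A0 (π i)))⁻¹ *
        (frobNorm (B0 (π i)))⁻¹ = 1 by field_simp, one_smul]
  · -- Toeplitz
    intro i k l k' l' h
    simp only [Matrix.smul_apply, smul_eq_mul]
    rw [hT0 (π i) k l k' l' h]
  · intro i; exact frobNorm_normalize (hA0ne (π i))
  · intro i; exact frobNorm_normalize (hB0ne (π i))
  · intro i; exact (hσ'pos (π i)).le
  · -- antitone
    have hm := Tuple.monotone_sort (fun i => -σ' i)
    intro x y hxy
    have := hm hxy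
    simp only [Function.comp_apply] at this
    rw [← hπdef] at this
    linarith
  · -- A linearly independent
    have hinj : Function.Injective
        (fun i : {i : Fin r // 0 < σ' (π i)} => π i.val) := by
      intro a b hab
      exact Subtype.ext (π.injective hab)
    have h1 : LinearIndependent ℝ
        (fun i : {i : Fin r // 0 < σ' (π i)} => A0 (π i.val)) := hA0.comp _ hinj
    have h2 := h1.units_smul (fun i => Units.mk0 ((frobNorm (A0 (π i.val)))⁻¹)
      (inv_ne_zero (frobNorm_pos (hA0ne (π i.val))).ne'))
    convert h2 using 2 with i
    rfl
  · -- B linearly independent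
    have hinj : Function.Injective
        (fun i : {i : Fin r // 0 < σ' (π i)} => π i.val) := by
      intro a b hab
      exact Subtype.ext (π.injective hab)
    have h1 : LinearIndependent ℝ
        (fun i : {i : Fin r // 0 < σ' (π i)} => B0 (π i.val)) := hB0.comp _ hinj
    have h2 := h1.units_smul (fun i => Units.mk0 ((frobNorm (B0 (π i.val)))⁻¹)
      (inv_ne_zero (frobNorm_pos (hB0ne (π i.val))).ne'))
    convert h2 using 2 with i
    rfl

end
end
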